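/- Let Q be a d×d complex matrix that is Hermitian and unitary (Q† = Q, Q² = 1), let λ be a real number, and let L be the linear endomorphism of d×d complex matrices given by L(A) = λ(Q A Q − A). Then the exponential of L (as an endomorphism of the space of d×d complex matrices) equals the map A ↦ (1 − p) A + p Q A Q, where p = (1 − e^{−2λ})/2. -/

import Mathlib

open Matrix

attribute [local instance] Matrix.frobeniusNormedAddCommGroup Matrix.frobeniusNormedSpace

/-- Port helper: in current Mathlib the Matrix topology instance is no longer unfolded by
instance search, so the (unchanged) topological-ring structure of the operator algebra is
supplied explicitly via the operator-norm ring structure. -/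
instance instIsTopologicalRingMatrixCLM (d : ℕ) :
    IsTopologicalRing (Matrix (Fin d) (Fin d) ℂ →L[ℂ] Matrix (Fin d) (Fin d) ℂ) := by
  let R : NormedRing (Matrix (Fin d) (Fin d) ℂ →L[ℂ] Matrix (Fin d) (Fin d) ℂ) :=
    @ContinuousLinearMap.toNormedRing _ _ _ _ _
  exact @NonUnitalSeminormedRing.toIsTopologicalRing _ R.toNonUnitalNormedRing.toNonUnitalSeminormedRing

noncomputable def conjCLM (d : ℕ) (Q : Matrix (Fin d) (Fin d) ℂ) :
    Matrix (Fin d) (Fin d) ℂ →L[ℂ] Matrix (Fin d) (Fin d) ℂ :=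
  LinearMap.toContinuousLinearMap
    { toFun := fun A => Q * A * Q
      map_add' := by intro A B; noncomm_ring
      map_smul' := by intro c A; simp [Matrix.mul_smul, Matrix.smul_mul] }

lemma conjCLM_apply (d : ℕ) (Q : Matrix (Fin d) (Fin d) ℂ) (A : Matrix (Fin d) (Fin d) ℂ) :
    conjCLM d Q A = Q * A * Q := rfl

lemma conj_conj (d : ℕ) (Q : Matrix (Fin d) (Fin d) ℂ) (hQ : Q * Q = 1)
    (A : Matrix (Fin d) (Fin d) ℂ) : Q * (Q * A * Q) * Q = A := by
  calc Q * (Q * A * Q) * Q = (Q * Q) * A * (Q * Q) := by noncomm_ring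
  _ = A := by rw [hQ]; simp

noncomputable def pauliRH (d : ℕ) (Q : Matrix (Fin d) (Fin d) ℂ) (hQ : Q * Q = 1) :
    ℂ × ℂ →+* (Matrix (Fin d) (Fin d) ℂ →L[ℂ] Matrix (Fin d) (Fin d) ℂ) where
  toFun x := ((x.1 + x.2) / 2) • 1 + ((x.1 - x.2) / 2) • conjCLM d Q
  map_one' := by
    refine ContinuousLinearMap.ext fun B => ?_
    simp only [ContinuousLinearMap.add_apply, ContinuousLinearMap.smul_apply,
      ContinuousLinearMap.one_apply, conjCLM_apply, Prod.fst_one, Prod.snd_one]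
    match_scalars <;> ring
  map_mul' x y := by
    refine ContinuousLinearMap.ext fun B => ?_
    simp only [ContinuousLinearMap.mul_apply, ContinuousLinearMap.add_apply,
      ContinuousLinearMap.smul_apply, ContinuousLinearMap.one_apply, conjCLM_apply,
      Prod.fst_mul, Prod.snd_mul, smul_add, smul_smul, mul_add, Matrix.mul_smul,
      Matrix.smul_mul, conj_conj d Q hQ]
    match_scalars <;> ring
  map_zero' := by
    refine ContinuousLinearMap.ext fun B => ?_
    simp
  map_add' x y := by
    refine ContinuousLinearMap.ext fun B => ?_
    simp only [ContinuousLinearMap.add_apply, ContinuousLinearMap.smul_apply,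
      ContinuousLinearMap.one_apply, conjCLM_apply, Prod.fst_add, Prod.snd_add]
    match_scalars <;> ring

lemma pauliRH_cont (d : ℕ) (Q : Matrix (Fin d) (Fin d) ℂ) (hQ : Q * Q = 1) :
    Continuous (pauliRH d Q hQ) := by
  unfold pauliRH
  simp only [RingHom.coe_mk, MonoidHom.coe_mk, OneHom.coe_mk]
  fun_prop

/-- **Exponential of a Pauli-Lindblad generator is a Pauli channel.**
Let `Q` be a `d×d` Hermitian unitary complex matrix, `λ` real, and let `L` be the
(continuous) linear endomorphism of `d×d` complex matrices `L A = λ (Q A Q − A)`.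
Then `exp L` is the map `A ↦ (1 − p) A + p Q A Q` with `p = (1 − e^{−2λ})/2`. -/
theorem exp_pauli_lindblad_generator (d : ℕ) (Q : Matrix (Fin d) (Fin d) ℂ)
    (hQ_herm : Qᴴ = Q) (hQ_unit : Q * Q = 1) (lam : ℝ)
    (L : Matrix (Fin d) (Fin d) ℂ →L[ℂ] Matrix (Fin d) (Fin d) ℂ)
    (hL : ∀ A, L A = (lam : ℂ) • (Q * A * Q - A))
    (p : ℝ) (hp : p = (1 - Real.exp (-2 * lam)) / 2) :
    ∀ A, (NormedSpace.exp L) A = (1 - (p : ℂ)) • A + (p : ℂ) • (Q * A * Q) := by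
  intro A
  have hφL : pauliRH d Q hQ_unit ((0 : ℂ), ((-2 * lam : ℝ) : ℂ)) = L := by
    refine ContinuousLinearMap.ext fun B => ?_
    simp only [pauliRH, RingHom.coe_mk, MonoidHom.coe_mk, OneHom.coe_mk,
      ContinuousLinearMap.add_apply, ContinuousLinearMap.smul_apply,
      ContinuousLinearMap.one_apply, conjCLM_apply, hL B, smul_sub]
    push_cast
    match_scalars <;> ring
  have hexp : NormedSpace.exp ((0 : ℂ), ((-2 * lam : ℝ) : ℂ))
      = ((1 : ℂ), (Complex.exp (-2 * lam) : ℂ)) := by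
    refine Prod.ext ?_ ?_
    · rw [Prod.fst_exp]; simp [NormedSpace.exp_zero]
    · rw [Prod.snd_exp]; simp [Complex.exp_eq_exp_ℂ]
  have key : NormedSpace.exp L
      = pauliRH d Q hQ_unit ((1 : ℂ), (Complex.exp (-2 * lam) : ℂ)) := by
    rw [← hφL]
    have hm := @NormedSpace.map_exp (ℂ × ℂ)
      (Matrix (Fin d) (Fin d) ℂ →L[ℂ] Matrix (Fin d) (Fin d) ℂ) _ _ _
      (@ContinuousLinearMap.toNormedRing _ _ _ _ _)
      (inferInstance : Algebra ℚ (Matrix (Fin d) (Fin d) ℂ →L[ℂ] Matrix (Fin d) (Fin d) ℂ)) _ _ RingHom.instRingHomClass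
      (pauliRH d Q hQ_unit) (pauliRH_cont d Q hQ_unit) ((0 : ℂ), ((-2 * lam : ℝ) : ℂ))
    rw [hexp] at hm
    exact hm.symm
  rw [key]
  simp only [pauliRH, RingHom.coe_mk, MonoidHom.coe_mk, OneHom.coe_mk,
    ContinuousLinearMap.add_apply, ContinuousLinearMap.smul_apply,
    ContinuousLinearMap.one_apply, conjCLM_apply]
  have hpC : (p : ℂ) = (1 - Complex.exp (-2 * lam)) / 2 := by
    rw [hp]; push_cast [Complex.ofReal_exp]; ring
  rw [hpC]
  match_scalars <;> ring
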